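/- Let $a > b > 0$, $c_1 \ge 1$, $c_2 > 0$, and let $\delta > 0$ be the unique positive solution of $\frac{a c_1 \delta}{1+a\delta} + \frac{b c_2 \delta}{1+b\delta} = 1$. If $\alpha > 0$ also satisfies $\frac{a c_1 \alpha}{1+a\alpha} + \frac{b c_2 \alpha}{1+b\alpha} = 1$, then $\alpha = \delta$. More generally, for any $\alpha, \delta > 0$ with these fixed-point values, the contraction coefficient $C_{a,b} = \frac{\frac{a^2 c_1 \delta}{(1+a\delta)(1+a\alpha)} + \frac{b^2 c_2 \delta}{(1+b\delta)(1+b\alpha)}}{\frac{a c_1}{1+a\alpha} + \frac{b c_2}{1+b\alpha}}$ satisfies $C_{a,b} < 1$. -/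
import Mathlib


theorem jacobi_fixed_point_unique_and_contraction (a b c1 c2 α δ : ℝ)
    (hab : b < a) (hb : 0 < b) (hc1 : 1 ≤ c1) (hc2 : 0 < c2)
    (hδ : 0 < δ) (hα : 0 < α)
    (hδeq : a*c1*δ/(1+a*δ) + b*c2*δ/(1+b*δ) = 1)
    (hαeq : a*c1*α/(1+a*α) + b*c2*α/(1+b*α) = 1) :
    α = δ ∧
    (a^2*c1*δ/((1+a*δ)*(1+a*α)) + b^2*c2*δ/((1+b*δ)*(1+b*α))) /
      (a*c1/(1+a*α) + b*c2/(1+b*α)) < 1 := by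
  have ha : 0 < a := hb.trans hab
  have hP : (0:ℝ) < 1 + a*δ := by nlinarith
  have hQ : (0:ℝ) < 1 + b*δ := by nlinarith
  have hR : (0:ℝ) < 1 + a*α := by nlinarith
  have hS : (0:ℝ) < 1 + b*α := by nlinarith
  have e1 : a*c1*δ*(1+b*δ) + b*c2*δ*(1+a*δ) = (1+a*δ)*(1+b*δ) := by
    field_simp at hδeq; linarith
  have e2 : a*c1*α*(1+b*α) + b*c2*α*(1+a*α) = (1+a*α)*(1+b*α) := by
    field_simp at hαeq; linarith
  have hfac : (α - δ) * (a*b*(c1+c2-1)*(α+δ) + (a*c1+b*c2-a-b)) = 0 := by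
    nlinarith [e1, e2]
  have hposδ : (a*b*(c1+c2-1)*(α+δ) + (a*c1+b*c2-a-b)) * δ
      = a*b*(c1+c2-1)*α*δ + 1 := by nlinarith [e1]
  have hfacpos : 0 < a*b*(c1+c2-1)*(α+δ) + (a*c1+b*c2-a-b) := by
    have hc : 0 < c1+c2-1 := by linarith
    have h1 : 0 < a*b*(c1+c2-1)*α*δ + 1 := by positivity
    nlinarith [hposδ]
  have hαδ : α = δ := by
    rcases mul_eq_zero.1 hfac with h | h
    · linarith
    · exfalso; linarith
  subst hαδ
  refine ⟨rfl, ?_⟩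
  have hD : 0 < a*c1/(1+a*α) + b*c2/(1+b*α) := by positivity
  rw [div_lt_one hD]
  have hdiff : (a*c1/(1+a*α) + b*c2/(1+b*α)) -
      (a^2*c1*α/((1+a*α)*(1+a*α)) + b^2*c2*α/((1+b*α)*(1+b*α)))
      = a*c1/(1+a*α)^2 + b*c2/(1+b*α)^2 := by
    field_simp; ring
  have hpos : 0 < a*c1/(1+a*α)^2 + b*c2/(1+b*α)^2 := by positivity
  linarith
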